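/- Let C ⊆ F_2^n be a nonempty code with distance distribution (A_i), let 1 ≤ w ≤ n, and define the binomial moment F_w = Σ_{i=0}^{w} binom(n−i, n−w)·A_i. If f(x) = Σ_k f_k K_k(x) has f_k ≥ 0 for 1 ≤ k ≤ n and f(i) ≤ binom(n−i, n−w) for all 0 ≤ i ≤ n (with binom(n−i,n−w) interpreted as 0 when i > w), then F_w ≥ |C|·f_0 − f(0). -/

import Mathlib

open Finset

noncomputable def distDistr (n : ℕ) (C : Finset (Fin n → ZMod 2)) (i : ℕ) : ℝ :=
  (((C ×ˢ C).filter (fun p => hammingDist p.1 p.2 = i)).card : ℝ) / (C.card : ℝ)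

noncomputable def kraw (n k i : ℕ) : ℝ :=
  ∑ j ∈ Finset.range (k + 1), (-1 : ℝ) ^ j * (i.choose j : ℝ) * ((n - i).choose (k - j) : ℝ)

lemma kraw_eq_sum_powersetCard {n : ℕ} (k : ℕ) (T : Finset (Fin n)) :
    ∑ S ∈ Finset.powersetCard k (univ : Finset (Fin n)), (-1 : ℝ) ^ (S ∩ T).card
      = kraw n k T.card := by
  classical
  set d := T.card with hd
  have hdn : d ≤ n := by
    simpa using card_le_card (subset_univ T)
  have hTc : Tᶜ.card = n - d := by simp [card_compl, hd]
  have hbij : ∑ S ∈ Finset.powersetCard k (univ : Finset (Fin n)), (-1 : ℝ) ^ (S ∩ T).card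
      = ∑ p ∈ (T.powerset ×ˢ Tᶜ.powerset).filter (fun p => p.1.card + p.2.card = k),
          (-1 : ℝ) ^ p.1.card := by
    refine Finset.sum_nbij' (fun S => (S ∩ T, S \ T)) (fun p => p.1 ∪ p.2) ?_ ?_ ?_ ?_ ?_
    · intro S hS
      rw [mem_powersetCard] at hS
      rw [mem_filter, mem_product, mem_powerset, mem_powerset]
      refine ⟨⟨inter_subset_right, ?_⟩, ?_⟩
      · intro x hx
        rw [mem_sdiff] at hx
        simpa [mem_compl] using hx.2
      · rw [card_inter_add_card_sdiff, hS.2]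
    · intro p hp
      rw [mem_filter, mem_product, mem_powerset, mem_powerset] at hp
      rw [mem_powersetCard]
      refine ⟨subset_univ _, ?_⟩
      rw [card_union_of_disjoint, hp.2]
      exact Finset.disjoint_left.2 fun x hx1 hx2 =>
        (mem_compl.1 (hp.1.2 hx2)) (hp.1.1 hx1)
    · intro S hS
      ext x
      simp only [mem_union, mem_inter, mem_sdiff]
      tauto
    · intro p hp
      rw [mem_filter, mem_product, mem_powerset, mem_powerset] at hp
      ext1
      · ext x
        simp only [mem_inter, mem_union]
        constructor
        · rintro ⟨hx | hx, hxT⟩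
          · exact hx
          · exact absurd hxT (mem_compl.1 (hp.1.2 hx))
        · intro hx; exact ⟨Or.inl hx, hp.1.1 hx⟩
      · ext x
        simp only [mem_sdiff, mem_union]
        constructor
        · rintro ⟨hx | hx, hxT⟩
          · exact absurd (hp.1.1 hx) hxT
          · exact hx
        · intro hx; exact ⟨Or.inr hx, mem_compl.1 (hp.1.2 hx)⟩
    · intro S hS; rfl
  rw [hbij, Finset.sum_filter, Finset.sum_product]
  have hinner : ∀ A ∈ T.powerset,
      (∑ B ∈ Tᶜ.powerset, if A.card + B.card = k then (-1 : ℝ) ^ A.card else 0)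
        = (if A.card ≤ k then (-1 : ℝ) ^ A.card * ((n - d).choose (k - A.card) : ℝ) else 0) := by
    intro A _
    by_cases hA : A.card ≤ k
    · rw [if_pos hA, ← Finset.sum_filter]
      have hfe : Tᶜ.powerset.filter (fun B => A.card + B.card = k)
          = Tᶜ.powersetCard (k - A.card) := by
        rw [powersetCard_eq_filter]
        apply filter_congr
        intro B _
        constructor <;> intro h <;> omega
      rw [hfe, Finset.sum_const, card_powersetCard, hTc, nsmul_eq_mul]
      ring
    · rw [if_neg hA]
      apply Finset.sum_eq_zero
      intro B _
      rw [if_neg]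
      omega
  rw [Finset.sum_congr rfl hinner, Finset.sum_powerset_apply_card
    (fun m => if m ≤ k then (-1 : ℝ) ^ m * ((n - d).choose (k - m) : ℝ) else 0)]
  -- now: ∑ m ∈ range (d+1), d.choose m • (if m ≤ k then ...) = kraw n k d
  have hL : ∀ m, (d.choose m) • (if m ≤ k then (-1 : ℝ) ^ m * ((n - d).choose (k - m) : ℝ) else 0)
      = (if m ≤ k then (-1 : ℝ) ^ m * (d.choose m : ℝ) * ((n - d).choose (k - m) : ℝ) else 0) := by
    intro m
    by_cases hm : m ≤ k <;> simp [hm, nsmul_eq_mul] <;> ring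
  simp only [← hd, hL]
  rw [kraw]
  have hR : ∀ j ∈ Finset.range (k + 1),
      (-1 : ℝ) ^ j * (d.choose j : ℝ) * ((n - d).choose (k - j) : ℝ)
        = (if j ≤ k then (-1 : ℝ) ^ j * (d.choose j : ℝ) * ((n - d).choose (k - j) : ℝ) else 0) := by
    intro j hj
    rw [if_pos (by simpa using Nat.lt_succ_iff.1 (mem_range.1 hj))]
  rw [Finset.sum_congr rfl hR]
  -- both sides extend to range (d + k + 1)
  rw [show (∑ j ∈ Finset.range (k + 1),
      if j ≤ k then (-1 : ℝ) ^ j * (d.choose j : ℝ) * ((n - d).choose (k - j) : ℝ) else 0)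
    = ∑ j ∈ Finset.range (d + k + 1),
      if j ≤ k then (-1 : ℝ) ^ j * (d.choose j : ℝ) * ((n - d).choose (k - j) : ℝ) else 0 from
    Finset.sum_subset (by intro x hx; simp at hx ⊢; omega)
      (by intro x _ hx; rw [if_neg]; simp at hx; omega)]
  apply Finset.sum_subset
  · intro x hx; simp at hx ⊢; omega
  · intro x _ hx
    simp only [mem_range] at hx
    by_cases h : x ≤ k
    · rw [if_pos h, Nat.choose_eq_zero_of_lt (by omega)]
      simp
    · rw [if_neg h]

lemma chi_mul (a b : ZMod 2) :
    (-1 : ℝ) ^ a.val * (-1) ^ b.val = if a ≠ b then (-1 : ℝ) else 1 := by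
  have h : ∀ c : ZMod 2, c = 0 ∨ c = 1 := by decide
  rcases h a with ha | ha <;> rcases h b with hb | hb <;>
    simp [ha, hb, ZMod.val_one]

lemma kraw_hammingDist {n : ℕ} (k : ℕ) (u v : Fin n → ZMod 2) :
    kraw n k (hammingDist u v)
      = ∑ S ∈ Finset.powersetCard k (univ : Finset (Fin n)),
          (∏ j ∈ S, (-1 : ℝ) ^ (u j).val) * (∏ j ∈ S, (-1 : ℝ) ^ (v j).val) := by
  classical
  have hT : hammingDist u v = (univ.filter fun j => u j ≠ v j).card := rfl
  rw [hT, ← kraw_eq_sum_powersetCard]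
  refine Finset.sum_congr rfl fun S _ => ?_
  rw [← Finset.prod_mul_distrib]
  rw [Finset.prod_congr rfl (fun j _ => chi_mul (u j) (v j))]
  rw [Finset.prod_ite, Finset.prod_const, Finset.prod_const, one_pow, mul_one]
  congr 1
  congr 1
  ext x
  simp

lemma delsarte_nonneg {n : ℕ} (k : ℕ) (C : Finset (Fin n → ZMod 2)) :
    0 ≤ ∑ p ∈ C ×ˢ C, kraw n k (hammingDist p.1 p.2) := by
  classical
  have h : ∑ p ∈ C ×ˢ C, kraw n k (hammingDist p.1 p.2)
      = ∑ S ∈ Finset.powersetCard k (univ : Finset (Fin n)),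
          (∑ c ∈ C, ∏ j ∈ S, (-1 : ℝ) ^ (c j).val) ^ 2 := by
    rw [Finset.sum_congr rfl fun p _ => kraw_hammingDist k p.1 p.2]
    rw [Finset.sum_comm]
    refine Finset.sum_congr rfl fun S _ => ?_
    rw [sq, Finset.sum_mul_sum C C (fun c => ∏ j ∈ S, (-1 : ℝ) ^ (c j).val)
      (fun c => ∏ j ∈ S, (-1 : ℝ) ^ (c j).val), Finset.sum_product]
  rw [h]
  positivity

lemma sum_pairs_eq {n : ℕ} (C : Finset (Fin n → ZMod 2)) (g : ℕ → ℝ) :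
    ∑ p ∈ C ×ˢ C, g (hammingDist p.1 p.2)
      = ∑ i ∈ Finset.range (n + 1),
          (((C ×ˢ C).filter (fun p => hammingDist p.1 p.2 = i)).card : ℝ) * g i := by
  classical
  rw [← Finset.sum_fiberwise_of_maps_to (g := fun p => hammingDist p.1 p.2)
      (t := Finset.range (n + 1)) (fun p _ => by
        simpa [Nat.lt_succ_iff] using (hammingDist_le_card_fintype (x := p.1) (y := p.2)))]
  refine Finset.sum_congr rfl fun i _ => ?_
  rw [Finset.sum_congr rfl (fun p hp => by rw [(Finset.mem_filter.1 hp).2])]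
  rw [Finset.sum_const, nsmul_eq_mul]

/-- Lower bound on the binomial moment `F_w = Σ_{i=0}^w binom(n−i,n−w) A_i`. -/
theorem stmt9 (n w : ℕ) (hw1 : 1 ≤ w) (hwn : w ≤ n)
    (C : Finset (Fin n → ZMod 2)) (hC : C.Nonempty)
    (fc : ℕ → ℝ)
    (hfc : ∀ k, 1 ≤ k → k ≤ n → 0 ≤ fc k)
    (hfg : ∀ i, i ≤ n →
      (∑ k ∈ Finset.range (n + 1), fc k * kraw n k i) ≤ ((n - i).choose (n - w) : ℝ)) :
    ∑ i ∈ Finset.range (w + 1), ((n - i).choose (n - w) : ℝ) * distDistr n C i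
      ≥ (C.card : ℝ) * fc 0 - (∑ k ∈ Finset.range (n + 1), fc k * kraw n k 0) := by
  classical
  have hCc : (0 : ℝ) < C.card := by
    exact_mod_cast Finset.card_pos.2 hC
  have hA : ∀ i, 0 ≤ distDistr n C i := fun i =>
    div_nonneg (by positivity) hCc.le
  -- the moments S_k
  set Sk : ℕ → ℝ := fun k => ∑ i ∈ Finset.range (n + 1), kraw n k i * distDistr n C i with hSk
  have hSkval : ∀ k, Sk k = (∑ p ∈ C ×ˢ C, kraw n k (hammingDist p.1 p.2)) / C.card := by
    intro k
    rw [hSk, sum_pairs_eq C (fun i => kraw n k i), Finset.sum_div]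
    refine Finset.sum_congr rfl fun i _ => ?_
    rw [distDistr]
    ring
  have hSknn : ∀ k, 0 ≤ Sk k := fun k => by
    rw [hSkval k]; exact div_nonneg (delsarte_nonneg k C) hCc.le
  have hkraw0 : ∀ i, kraw n 0 i = 1 := by
    intro i; simp [kraw]
  have hS0 : Sk 0 = C.card := by
    have h1 : ∑ p ∈ C ×ˢ C, (1 : ℝ) = (C.card : ℝ) * C.card := by
      rw [Finset.sum_const, Finset.card_product, nsmul_eq_mul]
      push_cast; ring
    rw [hSkval 0]
    rw [Finset.sum_congr rfl fun p _ => hkraw0 (hammingDist p.1 p.2), h1]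
    field_simp
  -- the LHS extended to range (n+1)
  have hext : ∑ i ∈ Finset.range (w + 1), ((n - i).choose (n - w) : ℝ) * distDistr n C i
      = ∑ i ∈ Finset.range (n + 1), ((n - i).choose (n - w) : ℝ) * distDistr n C i := by
    apply Finset.sum_subset
    · intro x hx; simp at hx ⊢; omega
    · intro x hx1 hx2
      simp only [mem_range] at hx1 hx2
      rw [Nat.choose_eq_zero_of_lt (by omega)]
      simp
  have hstep2 : ∑ i ∈ Finset.range (n + 1), ((n - i).choose (n - w) : ℝ) * distDistr n C i
      ≥ ∑ i ∈ Finset.range (n + 1),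
          (∑ k ∈ Finset.range (n + 1), fc k * kraw n k i) * distDistr n C i := by
    apply Finset.sum_le_sum
    intro i hi
    exact mul_le_mul_of_nonneg_right (hfg i (Nat.lt_succ_iff.1 (mem_range.1 hi))) (hA i)
  have hstep3 : ∑ i ∈ Finset.range (n + 1),
        (∑ k ∈ Finset.range (n + 1), fc k * kraw n k i) * distDistr n C i
      = ∑ k ∈ Finset.range (n + 1), fc k * Sk k := by
    simp only [Finset.sum_mul]
    rw [Finset.sum_comm]
    refine Finset.sum_congr rfl fun k _ => ?_
    rw [hSk, Finset.mul_sum]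
    exact Finset.sum_congr rfl fun i _ => by ring
  -- split off k = 0
  have hsplit : ∑ k ∈ Finset.range (n + 1), fc k * Sk k
      = (∑ m ∈ Finset.range n, fc (m + 1) * Sk (m + 1)) + fc 0 * Sk 0 :=
    Finset.sum_range_succ' _ n
  have htail : 0 ≤ ∑ m ∈ Finset.range n, fc (m + 1) * Sk (m + 1) := by
    apply Finset.sum_nonneg
    intro m hm
    exact mul_nonneg (hfc (m + 1) (by omega) (by simp at hm; omega)) (hSknn (m + 1))
  have hmain : ∑ i ∈ Finset.range (w + 1), ((n - i).choose (n - w) : ℝ) * distDistr n C i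
      ≥ (C.card : ℝ) * fc 0 := by
    rw [hext]
    calc ∑ i ∈ Finset.range (n + 1), ((n - i).choose (n - w) : ℝ) * distDistr n C i
        ≥ ∑ k ∈ Finset.range (n + 1), fc k * Sk k := by rw [← hstep3]; exact hstep2
      _ = (∑ m ∈ Finset.range n, fc (m + 1) * Sk (m + 1)) + fc 0 * Sk 0 := hsplit
      _ ≥ fc 0 * Sk 0 := le_add_of_nonneg_left htail
      _ = (C.card : ℝ) * fc 0 := by rw [hS0]; ring
  -- properties of f(0)
  have hkrnn : ∀ k, 0 ≤ kraw n k 0 := by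
    intro k
    rw [show (0 : ℕ) = (∅ : Finset (Fin n)).card by simp, ← kraw_eq_sum_powersetCard]
    apply Finset.sum_nonneg
    intro S _
    simp
  have hf0 : fc 0 ≤ ∑ k ∈ Finset.range (n + 1), fc k * kraw n k 0 := by
    rw [Finset.sum_range_succ' _ n, hkraw0 0, mul_one]
    refine le_add_of_nonneg_left (Finset.sum_nonneg fun m hm => ?_)
    exact mul_nonneg (hfc (m + 1) (by omega) (by simp at hm; omega)) (hkrnn (m + 1))
  have hFnn : 0 ≤ ∑ i ∈ Finset.range (w + 1), ((n - i).choose (n - w) : ℝ) * distDistr n C i :=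
    Finset.sum_nonneg fun i _ => mul_nonneg (by positivity) (hA i)
  set f0 := ∑ k ∈ Finset.range (n + 1), fc k * kraw n k 0 with hf0def
  rcases le_or_gt 0 f0 with hcase | hcase
  · linarith [hmain]
  · have hfc0 : fc 0 < 0 := lt_of_le_of_lt hf0 hcase
    have h1 : (1 : ℝ) ≤ C.card := by exact_mod_cast Finset.card_pos.2 hC
    nlinarith [hFnn, hf0, mul_nonneg (sub_nonneg.2 h1) (neg_nonneg.2 hfc0.le)]
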